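/- (Eigenvalue upper bound in Corollary 2.1.) Let δ ∈ ℝ^{d×m} with Frobenius norm ‖δ‖₂ ≤ Δ, and suppose δWᵀ is symmetric positive semidefinite. Set δ_u = δUᵀe ∈ ℝ^d, Σ_δ = (I_d + (1/m)δWᵀ)^{−1}, and μ_δ = −(1/m)·Σ_δ·δ_u. Let σ₁ ≤ σ₂ ≤ … ≤ σ_d be the eigenvalues of Σ_δ^{−1} = I_d + (1/m)δWᵀ. Then ½·[ log det Σ_δ − d + tr(Σ_δ^{−1}) + μ_δᵀΣ_δ^{−1}μ_δ ] ≤ ½·[ Σ_{i=1}^d (σ_i − log σ_i) − d + (σ_d/m²)·‖Uᵀe‖₂²·Δ² ]. -/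

import Mathlib

open Matrix
open scoped RealInnerProductSpace

/-- The covariance `Σ_δ = (I_d + (1/m)·δWᵀ)⁻¹`. -/
noncomputable def SigmaDelta (d m : ℕ) (W δ : Matrix (Fin d) (Fin m) ℝ) :
    Matrix (Fin d) (Fin d) ℝ :=
  (1 + (m : ℝ)⁻¹ • (δ * Wᵀ))⁻¹

/-- The shifted input `δ_u = δ Uᵀ e ∈ ℝ^d`. -/
noncomputable def deltaU (d m de : ℕ) (U : Matrix (Fin de) (Fin m) ℝ) (e : Fin de → ℝ)
    (δ : Matrix (Fin d) (Fin m) ℝ) : Fin d → ℝ :=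
  δ.mulVec (Uᵀ.mulVec e)

/-- The mean `μ_δ = −(1/m)·Σ_δ·δ_u ∈ ℝ^d`. -/
noncomputable def muDelta (d m de : ℕ) (W : Matrix (Fin d) (Fin m) ℝ)
    (U : Matrix (Fin de) (Fin m) ℝ) (e : Fin de → ℝ)
    (δ : Matrix (Fin d) (Fin m) ℝ) : EuclideanSpace ℝ (Fin d) :=
  -((m : ℝ)⁻¹ • ((WithLp.equiv 2 _).symm
      ((SigmaDelta d m W δ).mulVec (deltaU d m de U e δ)) : EuclideanSpace ℝ (Fin d)))

/-- The Frobenius norm `‖δ‖₂` of a matrix. -/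
noncomputable def frobNorm (d m : ℕ) (δ : Matrix (Fin d) (Fin m) ℝ) : ℝ :=
  Real.sqrt (∑ i, ∑ j, δ i j ^ 2)

lemma euclid_inner_eq (n : ℕ) (x y : EuclideanSpace ℝ (Fin n)) :
    ⟪x, y⟫ = ∑ i, x i * y i := by
  simp [PiLp.inner_apply, RCLike.inner_apply, mul_comm]

/-- **Eigenvalue upper bound in Corollary 2.1.** For `δ` with Frobenius norm
`‖δ‖₂ ≤ Δ` and `δWᵀ` symmetric positive semidefinite, if `σ_1 ≤ … ≤ σ_d` are the eigenvalues
of `Σ_δ⁻¹ = I_d + (1/m)·δWᵀ` (with `σ_d` the largest), then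
`½·[log det Σ_δ − d + tr(Σ_δ⁻¹) + μ_δᵀΣ_δ⁻¹μ_δ]
  ≤ ½·[Σᵢ (σ_i − log σ_i) − d + (σ_d/m²)·‖Uᵀe‖₂²·Δ²]`. -/
theorem eigenvalue_upper_bound (d m de : ℕ) (hd : 0 < d) (hm : 0 < m) (hde : 0 < de)
    (W : Matrix (Fin d) (Fin m) ℝ) (U : Matrix (Fin de) (Fin m) ℝ) (e : Fin de → ℝ)
    (δ : Matrix (Fin d) (Fin m) ℝ) (Δ : ℝ)
    (hδ : frobNorm d m δ ≤ Δ)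
    (hpsd : (δ * Wᵀ).PosSemidef)
    (hH : ((SigmaDelta d m W δ)⁻¹).IsHermitian)
    (σd : ℝ) (hσd : IsGreatest (Set.range hH.eigenvalues) σd) :
    (1 / 2) * (Real.log (SigmaDelta d m W δ).det - d + ((SigmaDelta d m W δ)⁻¹).trace +
        ⟪muDelta d m de W U e δ,
          ((WithLp.equiv 2 _).symm
            ((SigmaDelta d m W δ)⁻¹.mulVec (muDelta d m de W U e δ)) :
              EuclideanSpace ℝ (Fin d))⟫)
      ≤ (1 / 2) * ((∑ i, (hH.eigenvalues i - Real.log (hH.eigenvalues i))) - d +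
          (σd / (m : ℝ) ^ 2) *
            ‖((WithLp.equiv 2 _).symm (Uᵀ.mulVec e) : EuclideanSpace ℝ (Fin m))‖ ^ 2 *
            Δ ^ 2) := by
  have hm' : (0:ℝ) < m := by exact_mod_cast hm
  set B : Matrix (Fin d) (Fin d) ℝ := (m:ℝ)⁻¹ • (δ * Wᵀ) with hBdef
  have hBpsd : B.PosSemidef := by
    refine PosSemidef.of_dotProduct_mulVec_nonneg ?_ fun x => ?_
    · unfold Matrix.IsHermitian
      rw [hBdef, conjTranspose_smul, hpsd.1.eq]
      simp
    · rw [hBdef, smul_mulVec, dotProduct_smul]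
      exact mul_nonneg (by positivity) (hpsd.dotProduct_mulVec_nonneg x)
  have hApd : (1 + B).PosDef := Matrix.PosDef.add_posSemidef Matrix.PosDef.one hBpsd
  have hAdet : IsUnit (1 + B).det := hApd.det_pos.ne'.isUnit
  have hSig : SigmaDelta d m W δ = (1 + B)⁻¹ := rfl
  have hMeq : (SigmaDelta d m W δ)⁻¹ = 1 + B := by
    rw [hSig, Matrix.nonsing_inv_nonsing_inv _ hAdet]
  have hMpd : ((SigmaDelta d m W δ)⁻¹).PosDef := hMeq ▸ hApd
  have hσpos : ∀ i, 0 < hH.eigenvalues i := fun i => hMpd.eigenvalues_pos i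
  -- trace
  have htr : ((SigmaDelta d m W δ)⁻¹).trace = ∑ i, hH.eigenvalues i := by
    conv_lhs => rw [hH.spectral_theorem]
    rw [Unitary.conjStarAlgAut_apply, Matrix.trace_mul_cycle, Unitary.coe_star_mul_self]
    simp [Matrix.trace_diagonal]
  -- determinant
  have hdet : Real.log (SigmaDelta d m W δ).det = -∑ i, Real.log (hH.eigenvalues i) := by
    have h1 : (SigmaDelta d m W δ).det = (((SigmaDelta d m W δ)⁻¹).det)⁻¹ := by
      rw [hMeq, hSig, Matrix.det_nonsing_inv, Ring.inverse_eq_inv']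
    have h2 : ((SigmaDelta d m W δ)⁻¹).det = ∏ i, hH.eigenvalues i := by
      simpa using hH.det_eq_prod_eigenvalues
    rw [h1, h2, Real.log_inv, Real.log_prod (fun i _ => (hσpos i).ne')]
  -- quadratic form
  set v : Fin m → ℝ := Uᵀ.mulVec e with hvdef
  set u : Fin d → ℝ := deltaU d m de U e δ with hudef
  set s : Fin d → ℝ := (SigmaDelta d m W δ).mulVec u with hsdef
  have hMs : ∀ x : Fin d → ℝ,
      ((SigmaDelta d m W δ)⁻¹).mulVec ((SigmaDelta d m W δ).mulVec x) = x := by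
    intro x
    rw [Matrix.mulVec_mulVec, hMeq, hSig, Matrix.mul_nonsing_inv _ hAdet, Matrix.one_mulVec]
  have hQval : ⟪muDelta d m de W U e δ,
        ((WithLp.equiv 2 _).symm
          ((SigmaDelta d m W δ)⁻¹.mulVec (muDelta d m de W U e δ)) :
            EuclideanSpace ℝ (Fin d))⟫ = (m:ℝ)⁻¹^2 * (s ⬝ᵥ u) := by
    rw [euclid_inner_eq]
    have hmu : (muDelta d m de W U e δ : Fin d → ℝ) = -((m:ℝ)⁻¹ • s) := rfl
    have hmv : (SigmaDelta d m W δ)⁻¹.mulVec (muDelta d m de W U e δ)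
        = -((m:ℝ)⁻¹ • u) := by
      show (SigmaDelta d m W δ)⁻¹.mulVec (-((m:ℝ)⁻¹ • s)) = _
      rw [Matrix.mulVec_neg, Matrix.mulVec_smul, hsdef, hMs]
    calc (∑ i, (muDelta d m de W U e δ) i *
          ((WithLp.equiv 2 _).symm ((SigmaDelta d m W δ)⁻¹.mulVec (muDelta d m de W U e δ)) :
            EuclideanSpace ℝ (Fin d)) i)
        = ∑ i, (-((m:ℝ)⁻¹ • s)) i * (-((m:ℝ)⁻¹ • u)) i := by
          refine Finset.sum_congr rfl fun i _ => ?_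
          rw [hmv]
          congr 1
      _ = (m:ℝ)⁻¹^2 * (s ⬝ᵥ u) := by
          simp only [Pi.neg_apply, Pi.smul_apply, smul_eq_mul, dotProduct, Finset.mul_sum]
          exact Finset.sum_congr rfl fun i _ => by ring
  -- s ⬝ᵥ u ≤ u ⬝ᵥ u
  have hu_eq : u = s + B.mulVec s := by
    conv_lhs => rw [← hMs u, ← hsdef, hMeq, Matrix.add_mulVec, Matrix.one_mulVec]
  have hsu : s ⬝ᵥ u ≤ u ⬝ᵥ u := by
    have h2 : 0 ≤ (B.mulVec s) ⬝ᵥ s := by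
      have := hBpsd.dotProduct_mulVec_nonneg s
      rw [star_trivial] at this
      rwa [dotProduct_comm]
    have h3 : 0 ≤ (B.mulVec s) ⬝ᵥ (B.mulVec s) := by
      refine Finset.sum_nonneg fun i _ => mul_self_nonneg _
    have hexp : u ⬝ᵥ u - s ⬝ᵥ u = (B.mulVec s) ⬝ᵥ s + (B.mulVec s) ⬝ᵥ (B.mulVec s) := by
      rw [hu_eq]
      simp only [dotProduct_add, add_dotProduct]
      rw [dotProduct_comm s (B.mulVec s)]
      ring
    linarith
  -- u ⬝ᵥ u ≤ (∑∑ δ²) * (∑ v²)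
  have huu : u ⬝ᵥ u ≤ (∑ i, ∑ j, δ i j ^ 2) * (∑ j, v j ^ 2) := by
    have hui : ∀ i, u i = ∑ j, δ i j * v j := fun i => rfl
    have hstep : ∀ i, u i * u i ≤ (∑ j, δ i j ^ 2) * (∑ j, v j ^ 2) := by
      intro i
      rw [hui, ← sq]
      exact Finset.sum_mul_sq_le_sq_mul_sq Finset.univ (fun j => δ i j) v
    calc u ⬝ᵥ u = ∑ i, u i * u i := rfl
      _ ≤ ∑ i, (∑ j, δ i j ^ 2) * (∑ j, v j ^ 2) := Finset.sum_le_sum fun i _ => hstep i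
      _ = (∑ i, ∑ j, δ i j ^ 2) * (∑ j, v j ^ 2) := by rw [Finset.sum_mul]
  have hΔ0 : 0 ≤ Δ := le_trans (Real.sqrt_nonneg _) hδ
  have hfro : (∑ i, ∑ j, δ i j ^ 2) ≤ Δ ^ 2 := by
    have h0 : (0:ℝ) ≤ ∑ i, ∑ j, δ i j ^ 2 := by positivity
    have hδ' : Real.sqrt (∑ i, ∑ j, δ i j ^ 2) ≤ Δ := hδ
    calc (∑ i, ∑ j, δ i j ^ 2) = Real.sqrt (∑ i, ∑ j, δ i j ^ 2) ^ 2 := (Real.sq_sqrt h0).symm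
      _ ≤ Δ ^ 2 := pow_le_pow_left₀ (Real.sqrt_nonneg _) hδ' 2
  have hnorm : ‖((WithLp.equiv 2 _).symm (Uᵀ.mulVec e) : EuclideanSpace ℝ (Fin m))‖ ^ 2
      = ∑ j, v j ^ 2 := by
    rw [EuclideanSpace.norm_eq, Real.sq_sqrt (by positivity)]
    simp [hvdef, sq_abs]
  -- 1 ≤ σd
  have hσd1 : 1 ≤ σd := by
    obtain ⟨j, hj⟩ := hσd.1
    have h1 : 1 ≤ hH.eigenvalues j := by
      rw [hH.eigenvalues_eq j]
      set x : Fin d → ℝ := ⇑(hH.eigenvectorBasis j) with hx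
      have hxx : x ⬝ᵥ x = 1 := by
        have hn := hH.eigenvectorBasis.orthonormal.1 j
        have : ⟪hH.eigenvectorBasis j, hH.eigenvectorBasis j⟫
            = ‖hH.eigenvectorBasis j‖ ^ 2 := real_inner_self_eq_norm_sq _
        rw [hn, euclid_inner_eq] at this
        simpa [dotProduct] using this
      have hBx : 0 ≤ x ⬝ᵥ (B.mulVec x) := by
        have := hBpsd.dotProduct_mulVec_nonneg x
        rwa [star_trivial] at this
      have hM : (SigmaDelta d m W δ)⁻¹.mulVec x = x + B.mulVec x := by
        rw [hMeq, Matrix.add_mulVec, Matrix.one_mulVec]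
      rw [hM, star_trivial, dotProduct_add, hxx]
      simpa using hBx
    exact hj ▸ h1
  -- assemble
  have hvΔ0 : (0:ℝ) ≤ (∑ j, v j ^ 2) := by positivity
  have hQle : (m:ℝ)⁻¹^2 * (s ⬝ᵥ u)
      ≤ (σd / (m : ℝ) ^ 2) * (∑ j, v j ^ 2) * Δ ^ 2 := by
    have hc : (0:ℝ) < (m:ℝ)⁻¹^2 := by positivity
    have h1 : (m:ℝ)⁻¹^2 * (s ⬝ᵥ u) ≤ (m:ℝ)⁻¹^2 * ((∑ j, v j ^ 2) * Δ ^ 2) := by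
      have := hsu.trans huu
      have h2 : u ⬝ᵥ u ≤ Δ ^ 2 * (∑ j, v j ^ 2) := huu.trans (by nlinarith)
      nlinarith
    have h3 : (m:ℝ)⁻¹^2 * ((∑ j, v j ^ 2) * Δ ^ 2)
        ≤ (σd / (m : ℝ) ^ 2) * (∑ j, v j ^ 2) * Δ ^ 2 := by
      rw [div_eq_mul_inv, ← inv_pow]
      nlinarith [mul_nonneg (sub_nonneg.2 hσd1)
        (mul_nonneg (mul_nonneg hc.le hvΔ0) (sq_nonneg Δ))]
    linarith
  rw [hdet, htr, hQval, hnorm]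
  rw [Finset.sum_sub_distrib]
  linarith [hQle]
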